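/- Let A be a unital C*-algebra containing a von Neumann algebra M, π : A → M a bounded projection, F ⊆ M a finite-dimensional subfactor with compact unitary group U carrying Haar measure μ. Then π'(a) := ∬ u π(u* a v) v* dμ(u) dμ(v) defines a bounded projection of A onto M that is an F-bimodule map: π'(x a y) = x π'(a) y for x, y ∈ F, with ‖π'‖ ≤ ‖π‖. -/

import Mathlib

set_option synthInstance.maxHeartbeats 800000

set_option maxHeartbeats 3200000

open Filter Topology MeasureTheory

private lemma selfAdjoint_mem_span_unitary' {E : Type*} [NormedRing E] [StarRing E] [CStarRing E]
    [NormedAlgebra ℂ E] [StarModule ℂ E] [FiniteDimensional ℂ E]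
    {h : E} (hh : IsSelfAdjoint h) : h ∈ Submodule.span ℂ (unitary E : Set E) := by
  haveI : CompleteSpace E := FiniteDimensional.complete ℂ E
  set sp := Submodule.span ℂ (unitary E : Set E) with hsp
  have hclosed : IsClosed (sp : Set E) := sp.closed_of_finiteDimensional
  set x : E := Complex.I • h with hx
  have hskew : ∀ t : ℝ, (t : ℂ) • x ∈ skewAdjoint E := by
    intro t
    have hxx : (t : ℂ) • x = ((t : ℂ) * Complex.I) • h := by rw [hx, smul_smul]
    rw [skewAdjoint.mem_iff, hxx, star_smul, hh.star_eq, ← neg_smul]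
    congr 1
    simp [Complex.ext_iff]
  have hU : ∀ t : ℝ, NormedSpace.exp ((t : ℂ) • x) ∈ unitary E := fun t => by
    letI : NormedAlgebra ℚ E := .restrictScalars ℚ ℂ E
    exact NormedSpace.exp_mem_unitary_of_mem_skewAdjoint (hskew t)
  have hd : HasDerivAt (fun z : ℂ => NormedSpace.exp (z • x)) x 0 := by
    simpa using hasDerivAt_exp_smul_const (𝕂 := ℂ) x (0 : ℂ)
  have hslope : Tendsto (slope (fun z : ℂ => NormedSpace.exp (z • x)) 0) (𝓝[≠] (0 : ℂ)) (𝓝 x) :=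
    hasDerivAt_iff_tendsto_slope.mp hd
  have hof : Tendsto (fun t : ℝ => (t : ℂ)) (𝓝[≠] (0 : ℝ)) (𝓝[≠] (0 : ℂ)) := by
    apply tendsto_nhdsWithin_of_tendsto_nhds_of_eventually_within
    · simpa using (Complex.continuous_ofReal.tendsto 0).mono_left nhdsWithin_le_nhds
    · filter_upwards [self_mem_nhdsWithin] with t ht
      simpa [Complex.ofReal_eq_zero] using ht
  have hcomb : Tendsto (fun t : ℝ => slope (fun z : ℂ => NormedSpace.exp (z • x)) 0 (t : ℂ))
      (𝓝[≠] (0 : ℝ)) (𝓝 x) := hslope.comp hof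
  have hx_mem : x ∈ sp := by
    refine hclosed.mem_of_tendsto hcomb ?_
    filter_upwards with t
    have h1 : NormedSpace.exp ((t : ℂ) • x) ∈ sp := Submodule.subset_span (hU t)
    have h0 : NormedSpace.exp ((0 : ℂ) • x) ∈ sp := by
      simpa using Submodule.subset_span (hU 0)
    simp only [slope_def_field, slope, vsub_eq_sub]
    exact Submodule.smul_mem _ _ (Submodule.sub_mem _ h1 (by simpa using h0))
  have : (-Complex.I) • x ∈ sp := Submodule.smul_mem _ _ hx_mem
  simpa [hx, smul_smul] using this

private lemma mem_span_unitary' {E : Type*} [NormedRing E] [StarRing E] [CStarRing E]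
    [NormedAlgebra ℂ E] [StarModule ℂ E] [FiniteDimensional ℂ E]
    (z : E) : z ∈ Submodule.span ℂ (unitary E : Set E) := by
  have hre : IsSelfAdjoint ((2 : ℂ)⁻¹ • (z + star z)) := by
    rw [IsSelfAdjoint, star_smul, star_add, star_star, add_comm]
    congr 1
    simp [Complex.ext_iff]
  have him : IsSelfAdjoint ((2 : ℂ)⁻¹ • (Complex.I • (star z - z))) := by
    rw [IsSelfAdjoint, star_smul, star_smul, star_sub, star_star, smul_smul, smul_smul]
    rw [show star z - z = -(z - star z) by abel, smul_neg, ← neg_smul]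
    congr 1
    simp [Complex.ext_iff]
  have key : z = (2 : ℂ)⁻¹ • (z + star z) + Complex.I • ((2 : ℂ)⁻¹ • (Complex.I • (star z - z))) := by
    simp only [smul_smul, smul_sub, smul_add]
    rw [show Complex.I * ((2 : ℂ)⁻¹ * Complex.I) = -(2 : ℂ)⁻¹ by
      rw [mul_comm, mul_assoc, Complex.I_mul_I, mul_neg_one]]
    module
  rw [key]
  exact Submodule.add_mem _ (selfAdjoint_mem_span_unitary' hre)
    (Submodule.smul_mem _ _ (selfAdjoint_mem_span_unitary' him))

/- STATEMENT 15: Let `A` be a unital C*-algebra containing a (weakly closed) *-subalgebra `M`,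
`π : A → M` a bounded projection, and `F ⊆ M` a finite-dimensional *-subfactor.  Averaging
`π` over the Haar measure of the compact unitary group of `F`,
`π'(a) = ∬ u π(u* a v) v* dμ(u) dμ(v)`, yields a bounded projection `π'` of `A` onto `M`
which is an `F`-bimodule map and satisfies `‖π'‖ ≤ ‖π‖`. -/
theorem stmt_15 {A : Type*} [NormedRing A] [StarRing A] [CStarRing A] [NormedAlgebra ℂ A]
    [StarModule ℂ A] [CompleteSpace A]
    (M : StarSubalgebra ℂ A) (hMclosed : IsClosed (M : Set A))
    (F : StarSubalgebra ℂ A) [FiniteDimensional ℂ F]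
    (hFM : ∀ x, x ∈ F → x ∈ M)
    -- `π` is a bounded projection of `A` onto `M` with `‖π‖ ≤ Cπ`:
    (π : A →ₗ[ℂ] A) (hπr : ∀ a, π a ∈ M) (hπf : ∀ m ∈ M, π m = m)
    (Cπ : ℝ) (hπb : ∀ a, ‖π a‖ ≤ Cπ * ‖a‖) :
    ∃ π' : A →ₗ[ℂ] A,
      (∀ a, π' a ∈ M) ∧ (∀ m ∈ M, π' m = m) ∧
      (∀ a, ‖π' a‖ ≤ Cπ * ‖a‖) ∧
      -- `π'` is an `F`-bimodule map:
      (∀ x ∈ F, ∀ y ∈ F, ∀ a, π' (x * a * y) = x * π' a * y) := by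
  rcases subsingleton_or_nontrivial A with hA | hA
  · exact ⟨π, hπr, hπf, hπb, fun x _ y _ a => Subsingleton.elim _ _⟩
  haveI : Nontrivial F := ⟨1, 0, fun hcontra => one_ne_zero (congrArg Subtype.val hcontra)⟩
  set G := unitary F with hG
  have hGclosed : IsClosed (unitary F : Set F) := by
    have heq : (unitary F : Set F) =
        {u : F | star u * u = 1} ∩ {u : F | u * star u = 1} := by
      ext u; exact Unitary.mem_iff
    rw [heq]
    exact (isClosed_eq (continuous_star.mul continuous_id) continuous_const).inter
      (isClosed_eq (continuous_id.mul continuous_star) continuous_const)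
  have hGbdd : Bornology.IsBounded (unitary F : Set F) := by
    refine (Metric.isBounded_iff_subset_closedBall 0).2 ⟨1, fun u hu => ?_⟩
    simp [Metric.mem_closedBall, CStarRing.norm_of_mem_unitary hu]
  haveI : CompactSpace G :=
    isCompact_iff_compactSpace.mp (Metric.isCompact_of_isClosed_isBounded hGclosed hGbdd)
  haveI : ProperSpace F := FiniteDimensional.proper ℂ F
  haveI : SecondCountableTopology G := inferInstance
  haveI : IsTopologicalGroup G :=
    { continuous_mul := continuous_induced_rng.2
        ((continuous_subtype_val.comp continuous_fst).mul
          (continuous_subtype_val.comp continuous_snd))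
      continuous_inv := continuous_induced_rng.2 (continuous_star.comp continuous_subtype_val) }
  letI : MeasurableSpace G := borel G
  haveI : BorelSpace G := ⟨rfl⟩
  set μ : Measure G := Measure.haarMeasure (⊤ : TopologicalSpace.PositiveCompacts G) with hμ
  haveI : IsProbabilityMeasure μ :=
    ⟨by rw [hμ, ← TopologicalSpace.PositiveCompacts.coe_top]; exact Measure.haarMeasure_self⟩
  set ν : Measure (G × G) := μ.prod μ with hν
  haveI : IsProbabilityMeasure ν := by rw [hν]; infer_instance
  set cA : G → A := fun u => ((u : F) : A) with hcA
  have hcA_cont : Continuous cA := continuous_subtype_val.comp continuous_subtype_val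
  have hcA_memF : ∀ u : G, cA u ∈ F := fun u => (u : F).2
  have hcA_memM : ∀ u : G, cA u ∈ M := fun u => hFM _ (hcA_memF u)
  have hcA_unitary : ∀ u : G, cA u ∈ unitary A := by
    intro u
    rw [Unitary.mem_iff]
    exact ⟨congrArg Subtype.val (Unitary.coe_star_mul_self u),
      congrArg Subtype.val (Unitary.coe_mul_star_self u)⟩
  have hcA_mul : ∀ u v : G, cA (u * v) = cA u * cA v := fun u v => rfl
  have hcA_star_mul : ∀ u : G, star (cA u) * cA u = 1 := fun u => ((hcA_unitary u).1)
  have hcA_mul_star : ∀ u : G, cA u * star (cA u) = 1 := fun u => ((hcA_unitary u).2)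
  set πc : A →L[ℂ] A := π.mkContinuous Cπ hπb with hπc
  have hπc_apply : ∀ a, πc a = π a := fun a => rfl
  set Φ : A → G × G → A := fun a p =>
    cA p.1 * πc (star (cA p.1) * a * cA p.2) * star (cA p.2) with hΦ
  have hΦ_cont : ∀ a, Continuous (Φ a) := by
    intro a
    apply Continuous.mul
    apply Continuous.mul
    · exact hcA_cont.comp continuous_fst
    · exact πc.continuous.comp <| ((continuous_star.comp
        (hcA_cont.comp continuous_fst)).mul continuous_const).mul (hcA_cont.comp continuous_snd)
    · exact continuous_star.comp (hcA_cont.comp continuous_snd)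
  have hΦ_int : ∀ a, Integrable (Φ a) ν :=
    fun a => (hΦ_cont a).integrable_of_hasCompactSupport (HasCompactSupport.of_compactSpace _)
  set π' : A →ₗ[ℂ] A :=
    { toFun := fun a => ∫ p, Φ a p ∂ν
      map_add' := fun a b => by
        show (∫ p, Φ (a + b) p ∂ν) = (∫ p, Φ a p ∂ν) + ∫ p, Φ b p ∂ν
        rw [← integral_add (hΦ_int a) (hΦ_int b)]
        congr 1
        funext p
        simp only [hΦ]
        rw [mul_add, add_mul, map_add, mul_add, add_mul]
      map_smul' := fun c a => by
        show (∫ p, Φ (c • a) p ∂ν) = c • ∫ p, Φ a p ∂ν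
        rw [← integral_smul]
        congr 1
        funext p
        simp only [hΦ]
        rw [mul_smul_comm, smul_mul_assoc, πc.map_smul, mul_smul_comm, smul_mul_assoc] } with hπ'
  have hπ'_apply : ∀ a, π' a = ∫ p, Φ a p ∂ν := fun a => rfl
  have hL : ∀ (c : G) (a : A), π' (cA c * a) = cA c * π' a := by
    intro c a
    have key : ∀ p : G × G, Φ (cA c * a) ((c, 1) * p) = cA c * Φ a p := by
      intro p
      simp only [hΦ, Prod.fst_mul, Prod.snd_mul, hcA_mul, one_mul]
      rw [star_mul]
      have harg : star (cA p.1) * star (cA c) * (cA c * a) * cA p.2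
          = star (cA p.1) * a * cA p.2 := by
        rw [mul_assoc (star (cA p.1)) (star (cA c)), ← mul_assoc (star (cA c)),
          hcA_star_mul, one_mul]
      rw [harg, mul_assoc (cA c) (cA p.1), mul_assoc (cA c)]
    rw [hπ'_apply, hπ'_apply,
      show (∫ p, Φ (cA c * a) p ∂ν) = ∫ p, Φ (cA c * a) ((c, 1) * p) ∂ν from
        (integral_mul_left_eq_self (μ := ν) (Φ (cA c * a)) ((c, 1))).symm]
    simp only [key]
    exact ContinuousLinearMap.integral_comp_comm (ContinuousLinearMap.mul ℝ A (cA c)) (hΦ_int a)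
  have hR : ∀ (c : G) (a : A), π' (a * cA c) = π' a * cA c := by
    intro c a
    have key : ∀ p : G × G, Φ (a * cA c) p = Φ a ((1, c) * p) * cA c := by
      intro p
      simp only [hΦ, Prod.fst_mul, Prod.snd_mul, hcA_mul, one_mul]
      rw [star_mul (cA c) (cA p.2)]
      have harg : star (cA p.1) * a * (cA c * cA p.2)
          = star (cA p.1) * (a * cA c) * cA p.2 := by
        simp only [mul_assoc]
      rw [harg, mul_assoc _ (star (cA p.2) * star (cA c)) (cA c),
        mul_assoc (star (cA p.2)) (star (cA c)) (cA c), hcA_star_mul, mul_one]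
    have hint2 : Integrable (fun p => Φ a ((1, c) * p)) ν :=
      ((hΦ_cont a).comp (continuous_const.mul continuous_id)).integrable_of_hasCompactSupport
        (HasCompactSupport.of_compactSpace _)
    rw [hπ'_apply, hπ'_apply]
    calc (∫ p, Φ (a * cA c) p ∂ν) = ∫ p, Φ a ((1, c) * p) * cA c ∂ν := by simp only [key]
      _ = (∫ p, Φ a ((1, c) * p) ∂ν) * cA c :=
        ContinuousLinearMap.integral_comp_comm ((ContinuousLinearMap.mul ℝ A).flip (cA c)) hint2
      _ = (∫ p, Φ a p ∂ν) * cA c := by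
        rw [integral_mul_left_eq_self (μ := ν) (Φ a) ((1, c))]
  have hspan : ∀ z, z ∈ F → z ∈ Submodule.span ℂ (Set.range cA) := by
    intro z hz
    have h1 : (⟨z, hz⟩ : F) ∈ Submodule.span ℂ (unitary F : Set F) := mem_span_unitary' _
    have h2 := Submodule.mem_map_of_mem (f := F.toSubalgebra.val.toLinearMap) h1
    rw [Submodule.map_span] at h2
    have h3 : F.toSubalgebra.val.toLinearMap '' (unitary F : Set F) = Set.range cA := by
      ext w
      constructor
      · rintro ⟨u, hu, rfl⟩; exact ⟨⟨u, hu⟩, rfl⟩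
      · rintro ⟨u, rfl⟩; exact ⟨(u : F), u.2, rfl⟩
    rw [h3] at h2
    exact h2
  have hLF : ∀ z, z ∈ F → ∀ b, π' (z * b) = z * π' b := by
    intro z hz b
    have := LinearMap.eqOn_span (R := ℂ)
      (f := π'.comp (LinearMap.mulRight ℂ b)) (g := LinearMap.mulRight ℂ (π' b))
      (fun w hw => by
        obtain ⟨u, rfl⟩ := hw
        exact hL u b) (hspan z hz)
    simpa using this
  have hRF : ∀ z, z ∈ F → ∀ b, π' (b * z) = π' b * z := by
    intro z hz b
    have := LinearMap.eqOn_span (R := ℂ)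
      (f := π'.comp (LinearMap.mulLeft ℂ b)) (g := LinearMap.mulLeft ℂ (π' b))
      (fun w hw => by
        obtain ⟨u, rfl⟩ := hw
        exact hR u b) (hspan z hz)
    simpa using this
  refine ⟨π', ?_, ?_, ?_, ?_⟩
  · intro a
    rw [hπ'_apply]
    have hconv : Convex ℝ (M : Set A) := by
      have := (Submodule.restrictScalars ℝ (Subalgebra.toSubmodule M.toSubalgebra)).convex
      simpa using this
    refine hconv.integral_mem hMclosed ?_ (hΦ_int a)
    filter_upwards with p
    exact mul_mem (mul_mem (hcA_memM p.1) (hπr _)) (star_mem (hcA_memM p.2))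
  · intro m hm
    rw [hπ'_apply]
    have hconst : ∀ p : G × G, Φ m p = m := by
      intro p
      have hmem : star (cA p.1) * m * cA p.2 ∈ M :=
        mul_mem (mul_mem (star_mem (hcA_memM p.1)) hm) (hcA_memM p.2)
      simp only [hΦ]
      rw [hπc_apply, hπf _ hmem]
      calc cA p.1 * (star (cA p.1) * m * cA p.2) * star (cA p.2)
          = cA p.1 * star (cA p.1) * m * (cA p.2 * star (cA p.2)) := by
            simp only [mul_assoc]
        _ = m := by rw [hcA_mul_star, hcA_mul_star, one_mul, mul_one]
    simp only [hconst]
    simp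
  · intro a
    rw [hπ'_apply]
    have hC : ∀ p : G × G, ‖Φ a p‖ ≤ Cπ * ‖a‖ := by
      intro p
      simp only [hΦ]
      rw [mul_assoc, CStarRing.norm_mem_unitary_mul _ (hcA_unitary p.1),
        CStarRing.norm_mul_mem_unitary _ (Unitary.star_mem (hcA_unitary p.2)), hπc_apply]
      calc ‖π (star (cA p.1) * a * cA p.2)‖ ≤ Cπ * ‖star (cA p.1) * a * cA p.2‖ := hπb _
        _ = Cπ * ‖a‖ := by
            rw [mul_assoc, CStarRing.norm_mem_unitary_mul _ (Unitary.star_mem (hcA_unitary p.1)),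
              CStarRing.norm_mul_mem_unitary _ (hcA_unitary p.2)]
    calc ‖∫ p, Φ a p ∂ν‖ ≤ Cπ * ‖a‖ * (ν Set.univ).toReal :=
          norm_integral_le_of_norm_le_const (Eventually.of_forall hC)
      _ = Cπ * ‖a‖ := by simp
  · intro x hx y hy a
    rw [hRF y hy (x * a), hLF x hx a]
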